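/- Let C be a clutter on a finite vertex set X with a perfect matching e_1,…,e_g of König type. Then the following conditions are equivalent: (a) C is unmixed; (b) for any two distinct edges e, e' of C and any two distinct vertices x ∈ e, y ∈ e' with {x, y} contained in some e_i, the set (e \ {x}) ∪ (e' \ {y}) contains an edge of C; (c) for any two distinct edges e, e' of C, any index i, and any subset T of e_i with T ⊆ e ∪ e', the set ((e ∪ e') \ T) ∪ (e ∩ e') contains an edge of C. -/

import Mathlib

variable {V : Type} [Fintype V] [DecidableEq V]

/-- A clutter: a family of finsets (edges), none of which contains another. -/
def IsClutter (E : Set (Finset V)) : Prop :=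
  ∀ e ∈ E, ∀ f ∈ E, e ⊆ f → e = f

/-- A vertex cover: a set of vertices meeting every edge. -/
def IsVertexCover (E : Set (Finset V)) (C : Finset V) : Prop :=
  ∀ e ∈ E, (e ∩ C).Nonempty

/-- A minimal vertex cover. -/
def IsMinimalVertexCover (E : Set (Finset V)) (C : Finset V) : Prop :=
  IsVertexCover E C ∧ ∀ D ⊂ C, ¬ IsVertexCover E D

/-- The covering number: minimum cardinality of a vertex cover. -/
noncomputable def coveringNumber (E : Set (Finset V)) : ℕ :=
  sInf {n : ℕ | ∃ C : Finset V, IsVertexCover E C ∧ C.card = n}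

/-- Unmixed: all minimal vertex covers have the same cardinality. -/
def Unmixed (E : Set (Finset V)) : Prop :=
  ∀ C D : Finset V, IsMinimalVertexCover E C → IsMinimalVertexCover E D →
    C.card = D.card

/-- A matching: a set of pairwise disjoint edges. -/
def IsMatching (E : Set (Finset V)) (M : Finset (Finset V)) : Prop :=
  ↑M ⊆ E ∧ (M : Set (Finset V)).Pairwise Disjoint

/-- The König property: the maximum size of a matching equals the covering number. -/
def HasKonigProperty (E : Set (Finset V)) : Prop :=
  (∃ M : Finset (Finset V), IsMatching E M ∧ M.card = coveringNumber E) ∧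
  ∀ M : Finset (Finset V), IsMatching E M → M.card ≤ coveringNumber E

/-- A perfect matching of König type: pairwise disjoint edges `em 0, …, em (g-1)`
whose union is the whole vertex set, where `g` is the covering number. -/
def IsPerfectMatchingKT (E : Set (Finset V)) {g : ℕ} (em : Fin g → Finset V) : Prop :=
  (∀ i, em i ∈ E) ∧ (∀ i j, i ≠ j → Disjoint (em i) (em j)) ∧
  (∀ x : V, ∃ i, x ∈ em i) ∧ g = coveringNumber E

/-- An independent set: contains no edge. -/
def IsIndependentSet (E : Set (Finset V)) (F : Finset V) : Prop :=
  ∀ e ∈ E, ¬ e ⊆ F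

/-- A facet of the independence complex: a maximal independent set. -/
def IsFacet (E : Set (Finset V)) (F : Finset V) : Prop :=
  IsIndependentSet E F ∧ ∀ G : Finset V, IsIndependentSet E G → F ⊆ G → F = G

/-- The set of facets of the independence complex of a clutter. -/
def cFacets (E : Set (Finset V)) : Set (Finset V) := {F | IsFacet E F}

/-- `F : Fin s → Finset V` is a shelling order of the family of facets `Fac`. -/
def IsShelling {s : ℕ} (Fac : Set (Finset V)) (F : Fin s → Finset V) : Prop :=
  Function.Injective F ∧ (∀ G : Finset V, G ∈ Fac ↔ ∃ i, F i = G) ∧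
  ∀ i j : Fin s, i < j →
    ∃ v ∈ F j \ F i, ∃ l : Fin s, l < j ∧ F j \ F l = {v}

/-- A family of facets is shellable if it admits a shelling order. -/
def Shellable (Fac : Set (Finset V)) : Prop :=
  ∃ (s : ℕ) (F : Fin s → Finset V), IsShelling Fac F

/-- A family of facets is pure if all its members have the same cardinality. -/
def PureFamily (Fac : Set (Finset V)) : Prop :=
  ∀ F ∈ Fac, ∀ G ∈ Fac, F.card = G.card

/-- Pure shellable: pure and shellable. -/
def PureShellable (Fac : Set (Finset V)) : Prop :=
  PureFamily Fac ∧ Shellable Fac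

/-- A free vertex: a vertex belonging to exactly one edge. -/
def HasFreeVertex (E : Set (Finset V)) : Prop :=
  ∃ x : V, ∃ e ∈ E, x ∈ e ∧ ∀ f ∈ E, x ∈ f → f = e

/-- A cycle of length `r`: `r` distinct vertices and `r` distinct edges such that each
of the vertices lies in exactly two of the edges and each of the edges contains exactly
two of the vertices. -/
def HasCycleOfLength (E : Set (Finset V)) (r : ℕ) : Prop :=
  ∃ (v : Fin r → V) (f : Fin r → Finset V),
    Function.Injective v ∧ Function.Injective f ∧ (∀ j, f j ∈ E) ∧
    (∀ i : Fin r, (Finset.univ.filter (fun j => v i ∈ f j)).card = 2) ∧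
    (∀ j : Fin r, (Finset.univ.filter (fun i => v i ∈ f j)).card = 2)

private lemma pm_card_sum {g : ℕ} (em : Fin g → Finset V)
    (hdisj : ∀ i j, i ≠ j → Disjoint (em i) (em j))
    (hcov : ∀ x : V, ∃ i, x ∈ em i) (C : Finset V) :
    C.card = ∑ j : Fin g, (C ∩ em j).card := by
  have hC : C = Finset.univ.biUnion (fun j => C ∩ em j) := by
    ext v
    simp only [Finset.mem_biUnion, Finset.mem_univ, true_and, Finset.mem_inter]
    constructor
    · intro hv; obtain ⟨j, hj⟩ := hcov v; exact ⟨j, hv, hj⟩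
    · rintro ⟨j, hv, -⟩; exact hv
  conv_lhs => rw [hC]
  exact Finset.card_biUnion (fun i _ j _ hij =>
    Disjoint.mono Finset.inter_subset_right Finset.inter_subset_right (hdisj i j hij))

private lemma pm_inter_nonempty {E : Set (Finset V)} {g : ℕ} {em : Fin g → Finset V}
    (hem : ∀ i, em i ∈ E) {C : Finset V} (hC : IsVertexCover E C) (j : Fin g) :
    (C ∩ em j).Nonempty := by
  obtain ⟨v, hv⟩ := hC (em j) (hem j)
  rw [Finset.mem_inter] at hv
  exact ⟨v, Finset.mem_inter.mpr ⟨hv.2, hv.1⟩⟩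

private lemma cover_card_ge {E : Set (Finset V)} {g : ℕ} {em : Fin g → Finset V}
    (hem : ∀ i, em i ∈ E) (hdisj : ∀ i j, i ≠ j → Disjoint (em i) (em j))
    (hcov : ∀ x : V, ∃ i, x ∈ em i) {C : Finset V} (hC : IsVertexCover E C) :
    g ≤ C.card := by
  rw [pm_card_sum em hdisj hcov C]
  calc g = ∑ _j : Fin g, 1 := by simp
    _ ≤ ∑ j : Fin g, (C ∩ em j).card := Finset.sum_le_sum fun j _ =>
        Finset.card_pos.mpr (pm_inter_nonempty hem hC j)

private lemma cover_card_two {E : Set (Finset V)} {g : ℕ} {em : Fin g → Finset V}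
    (hem : ∀ i, em i ∈ E) (hdisj : ∀ i j, i ≠ j → Disjoint (em i) (em j))
    (hcov : ∀ x : V, ∃ i, x ∈ em i) {C : Finset V} (hC : IsVertexCover E C)
    {i : Fin g} {x y : V} (hx : x ∈ C) (hy : y ∈ C) (hxi : x ∈ em i) (hyi : y ∈ em i)
    (hxy : x ≠ y) : g + 1 ≤ C.card := by
  rw [pm_card_sum em hdisj hcov C]
  rw [← Finset.add_sum_erase Finset.univ _ (Finset.mem_univ i)]
  have h1 : 2 ≤ (C ∩ em i).card :=
    Finset.one_lt_card.mpr ⟨x, Finset.mem_inter.mpr ⟨hx, hxi⟩, y,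
      Finset.mem_inter.mpr ⟨hy, hyi⟩, hxy⟩
  have h2 : (Finset.univ.erase i).card ≤ ∑ j ∈ Finset.univ.erase i, (C ∩ em j).card := by
    calc (Finset.univ.erase i).card = ∑ _j ∈ Finset.univ.erase i, 1 := by simp
      _ ≤ _ := Finset.sum_le_sum fun j _ =>
          Finset.card_pos.mpr (pm_inter_nonempty hem hC j)
  have h3 : (Finset.univ.erase i).card = g - 1 := by
    rw [Finset.card_erase_of_mem (Finset.mem_univ i)]
    simp
  have hg1 : 1 ≤ g := i.pos
  omega

private lemma exists_minimal_cover_subset (E : Set (Finset V)) :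
    ∀ C : Finset V, IsVertexCover E C → ∃ D ⊆ C, IsMinimalVertexCover E D := by
  intro C
  induction C using Finset.strongInductionOn with
  | _ C ih =>
    intro hC
    by_cases h : ∃ D ⊂ C, IsVertexCover E D
    · obtain ⟨D, hDC, hD⟩ := h
      obtain ⟨D', hD'D, hD'⟩ := ih D hDC hD
      exact ⟨D', hD'D.trans hDC.subset, hD'⟩
    · exact ⟨C, Finset.Subset.refl C, hC, fun D hD hDcov => h ⟨D, hD, hDcov⟩⟩

private lemma exists_min_cover {E : Set (Finset V)} {g : ℕ} {em : Fin g → Finset V}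
    (hem : ∀ i, em i ∈ E) (hdisj : ∀ i j, i ≠ j → Disjoint (em i) (em j))
    (hcov : ∀ x : V, ∃ i, x ∈ em i) (hg : g = coveringNumber E) (h0 : ∅ ∉ E) :
    ∃ C : Finset V, IsMinimalVertexCover E C ∧ C.card = g := by
  have huniv : IsVertexCover E Finset.univ := by
    intro e he
    rw [Finset.inter_univ]
    rcases Finset.eq_empty_or_nonempty e with h | h
    · exact absurd (h ▸ he) h0
    · exact h
  have hmem : coveringNumber E ∈
      {n : ℕ | ∃ C : Finset V, IsVertexCover E C ∧ C.card = n} :=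
    Nat.sInf_mem ⟨Finset.univ.card, Finset.univ, huniv, rfl⟩
  obtain ⟨C, hCcov, hCcard⟩ := hmem
  refine ⟨C, ⟨hCcov, fun D hD hDcov => ?_⟩, by omega⟩
  have := cover_card_ge hem hdisj hcov hDcov
  have := Finset.card_lt_card hD
  omega

/-- For a clutter with a perfect matching `em` of König type, unmixedness
is equivalent to each of the combinatorial conditions (b) and (c). -/
theorem unmixed_characterization_perfect_matching
    (E : Set (Finset V)) (hclut : IsClutter E)
    {g : ℕ} (em : Fin g → Finset V) (hpm : IsPerfectMatchingKT E em) :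
    (Unmixed E ↔
      ∀ e ∈ E, ∀ e' ∈ E, e ≠ e' → ∀ x ∈ e, ∀ y ∈ e', x ≠ y →
        (∃ i, x ∈ em i ∧ y ∈ em i) →
        ∃ f ∈ E, f ⊆ e.erase x ∪ e'.erase y) ∧
    (Unmixed E ↔
      ∀ e ∈ E, ∀ e' ∈ E, e ≠ e' → ∀ i : Fin g, ∀ T ⊆ em i, T ⊆ e ∪ e' →
        ∃ f ∈ E, f ⊆ ((e ∪ e') \ T) ∪ (e ∩ e')) := by
  obtain ⟨hem, hdisj, hcovV, hg⟩ := hpm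
  -- (b) implies every minimal cover has cardinality g
  have minCard : (∀ e ∈ E, ∀ e' ∈ E, e ≠ e' → ∀ x ∈ e, ∀ y ∈ e', x ≠ y →
        (∃ i, x ∈ em i ∧ y ∈ em i) →
        ∃ f ∈ E, f ⊆ e.erase x ∪ e'.erase y) →
      ∀ C, IsMinimalVertexCover E C → C.card = g := by
    rintro hb C ⟨hCcov, hCmin⟩
    have sing : ∀ x ∈ C, ∃ e ∈ E, x ∈ e ∧ e ∩ C ⊆ {x} := by
      intro x hx
      have hsub : C.erase x ⊂ C := Finset.erase_ssubset hx
      have hnot := hCmin _ hsub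
      rw [IsVertexCover] at hnot
      push_neg at hnot
      obtain ⟨e, he, hempty⟩ := hnot
      try rw [Finset.not_nonempty_iff_eq_empty] at hempty
      have hsub2 : e ∩ C ⊆ {x} := by
        intro v hv
        rw [Finset.mem_inter] at hv
        rw [Finset.mem_singleton]
        by_contra hvx
        have : v ∈ e ∩ C.erase x :=
          Finset.mem_inter.mpr ⟨hv.1, Finset.mem_erase.mpr ⟨hvx, hv.2⟩⟩
        rw [hempty] at this
        exact absurd this (Finset.notMem_empty v)
      obtain ⟨v, hv⟩ := hCcov e he
      have := hsub2 hv
      rw [Finset.mem_singleton] at this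
      exact ⟨e, he, this ▸ (Finset.mem_inter.mp hv).1, hsub2⟩
    have h1 : ∀ i, (C ∩ em i).card = 1 := by
      intro i
      have hne : (C ∩ em i).Nonempty := pm_inter_nonempty hem hCcov i
      by_contra h
      have h2 : 1 < (C ∩ em i).card := by
        have := Finset.card_pos.mpr hne
        omega
      obtain ⟨x, hx, y, hy, hxy⟩ := Finset.one_lt_card.mp h2
      rw [Finset.mem_inter] at hx hy
      obtain ⟨e, he, hxe, heC⟩ := sing x hx.1
      obtain ⟨e', he', hye', he'C⟩ := sing y hy.1
      have hee' : e ≠ e' := by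
        intro heq
        have : x ∈ e' ∩ C := heq ▸ Finset.mem_inter.mpr ⟨hxe, hx.1⟩
        have := he'C this
        rw [Finset.mem_singleton] at this
        exact hxy this
      obtain ⟨f, hf, hfs⟩ := hb e he e' he' hee' x hxe y hye' hxy ⟨i, hx.2, hy.2⟩
      obtain ⟨v, hv⟩ := hCcov f hf
      rw [Finset.mem_inter] at hv
      have hv2 := hfs hv.1
      rw [Finset.mem_union] at hv2
      rcases hv2 with hv2 | hv2
      · rw [Finset.mem_erase] at hv2
        have : v ∈ e ∩ C := Finset.mem_inter.mpr ⟨hv2.2, hv.2⟩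
        have := heC this
        rw [Finset.mem_singleton] at this
        exact hv2.1 this
      · rw [Finset.mem_erase] at hv2
        have : v ∈ e' ∩ C := Finset.mem_inter.mpr ⟨hv2.2, hv.2⟩
        have := he'C this
        rw [Finset.mem_singleton] at this
        exact hv2.1 this
    rw [pm_card_sum em hdisj hcovV C]
    simp [h1]
  -- (b) → Unmixed
  have bImpU : (∀ e ∈ E, ∀ e' ∈ E, e ≠ e' → ∀ x ∈ e, ∀ y ∈ e', x ≠ y →
        (∃ i, x ∈ em i ∧ y ∈ em i) →
        ∃ f ∈ E, f ⊆ e.erase x ∪ e'.erase y) → Unmixed E := by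
    intro hb C D hC hD
    rw [minCard hb C hC, minCard hb D hD]
  -- Unmixed → (c)
  have uImpC : Unmixed E →
      ∀ e ∈ E, ∀ e' ∈ E, e ≠ e' → ∀ i : Fin g, ∀ T ⊆ em i, T ⊆ e ∪ e' →
        ∃ f ∈ E, f ⊆ ((e ∪ e') \ T) ∪ (e ∩ e') := by
    intro hu e he e' he' hne i T hTem hTee
    by_cases h0 : ∅ ∈ E
    · exact ⟨∅, h0, Finset.empty_subset _⟩
    by_contra hno
    push_neg at hno
    set B := ((e ∪ e') \ T) ∪ (e ∩ e') with hB
    have hcov' : IsVertexCover E Bᶜ := by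
      intro f hf
      obtain ⟨v, hvf, hvB⟩ := Finset.not_subset.mp (hno f hf)
      exact ⟨v, Finset.mem_inter.mpr ⟨hvf, Finset.mem_compl.mpr hvB⟩⟩
    obtain ⟨C, hCB, hCmin⟩ := exists_minimal_cover_subset E Bᶜ hcov'
    obtain ⟨C₀, hC₀, hC₀card⟩ := exists_min_cover hem hdisj hcovV hg h0
    have hCg : C.card = g := by rw [hu C C₀ hCmin hC₀, hC₀card]
    have hCB' : ∀ v ∈ C, v ∉ B := fun v hv => Finset.mem_compl.mp (hCB hv)
    have key : ∀ a ∈ E, a = e ∨ a = e' → ∀ v ∈ a ∩ C, v ∈ T := by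
      rintro a _ _ v hv
      rw [Finset.mem_inter] at hv
      have hvB := hCB' v hv.2
      rw [hB, Finset.mem_union, Finset.mem_sdiff] at hvB
      push_neg at hvB
      by_contra hvT
      rcases ‹a = e ∨ a = e'› with rfl | rfl
      · exact hvT (hvB.1 (Finset.mem_union_left _ hv.1))
      · exact hvT (hvB.1 (Finset.mem_union_right _ hv.1))
    obtain ⟨x, hx⟩ := hCmin.1 e he
    obtain ⟨y, hy⟩ := hCmin.1 e' he'
    have hxT : x ∈ T := key e he (Or.inl rfl) x hx
    have hyT : y ∈ T := key e' he' (Or.inr rfl) y hy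
    rw [Finset.mem_inter] at hx hy
    -- x ∉ e' and y ∉ e
    have hxB := hCB' x hx.2
    rw [hB, Finset.mem_union, Finset.mem_sdiff, Finset.mem_inter] at hxB
    push_neg at hxB
    have hxe' : x ∉ e' := fun h => (hxB.2 hx.1) h
    have hyB := hCB' y hy.2
    rw [hB, Finset.mem_union, Finset.mem_sdiff, Finset.mem_inter] at hyB
    push_neg at hyB
    have hye : y ∉ e := fun h => (hyB.2 h) hy.1
    have hxy : x ≠ y := fun h => hxe' (h ▸ hy.1)
    have := cover_card_two hem hdisj hcovV hCmin.1 hx.2 hy.2 (hTem hxT) (hTem hyT) hxy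
    omega
  -- (c) → (b)
  have cImpB : (∀ e ∈ E, ∀ e' ∈ E, e ≠ e' → ∀ i : Fin g, ∀ T ⊆ em i, T ⊆ e ∪ e' →
        ∃ f ∈ E, f ⊆ ((e ∪ e') \ T) ∪ (e ∩ e')) →
      ∀ e ∈ E, ∀ e' ∈ E, e ≠ e' → ∀ x ∈ e, ∀ y ∈ e', x ≠ y →
        (∃ i, x ∈ em i ∧ y ∈ em i) →
        ∃ f ∈ E, f ⊆ e.erase x ∪ e'.erase y := by
    rintro hc e he e' he' hne x hx y hy hxy ⟨i, hxi, hyi⟩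
    have hT1 : ({x, y} : Finset V) ⊆ em i := by
      intro v hv
      rw [Finset.mem_insert, Finset.mem_singleton] at hv
      rcases hv with rfl | rfl
      · exact hxi
      · exact hyi
    have hT2 : ({x, y} : Finset V) ⊆ e ∪ e' := by
      intro v hv
      rw [Finset.mem_insert, Finset.mem_singleton] at hv
      rcases hv with rfl | rfl
      · exact Finset.mem_union_left _ hx
      · exact Finset.mem_union_right _ hy
    obtain ⟨f, hf, hfs⟩ := hc e he e' he' hne i {x, y} hT1 hT2
    refine ⟨f, hf, hfs.trans ?_⟩
    intro v hv
    rw [Finset.mem_union, Finset.mem_sdiff, Finset.mem_union, Finset.mem_inter,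
      Finset.mem_insert, Finset.mem_singleton] at hv
    rw [Finset.mem_union, Finset.mem_erase, Finset.mem_erase]
    rcases hv with ⟨hve, hv2⟩ | ⟨hve, hve'⟩
    · push_neg at hv2
      rcases hve with hve | hve
      · exact Or.inl ⟨hv2.1, hve⟩
      · exact Or.inr ⟨hv2.2, hve⟩
    · by_cases hvx : v = x
      · exact Or.inr ⟨fun h => hxy (hvx ▸ h), hve'⟩
      · exact Or.inl ⟨hvx, hve⟩
  exact ⟨⟨fun hu => cImpB (uImpC hu), bImpU⟩, ⟨uImpC, fun hc => bImpU (cImpB hc)⟩⟩
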